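/- Let ρ be a real number with 1/2 < ρ < 1 and let T > 0. Then there exist constants C > 0 and ε₀ ∈ (0, 1) such that for every ε ∈ (0, ε₀), every x ∈ ℝ², every continuous O : ℝ → ℝ², and every t ∈ (0, T]: (1/ε) · ∫₀ᵗ ( ∫_{B(O(s), ε^ρ/2)} exp(−‖x−y‖²/(t−s)) dy ) / (t−s) ds ≤ C · ε^{2ρ−1} · (1 + log(1/ε)), where B(z, r) denotes the open Euclidean ball of center z and radius r in ℝ² and the integrals are Lebesgue integrals. In particular, since ρ > 1/2, the left-hand side tends to 0 as ε → 0, uniformly in x, O, and t ∈ (0, T]. -/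

import Mathlib

open MeasureTheory

private noncomputable abbrev E2 := EuclideanSpace ℝ (Fin 2)

private lemma gauss_integrable (x : E2) {τ : ℝ} (hτ : 0 < τ) :
    Integrable (fun y : E2 => Real.exp (-‖x - y‖ ^ 2 / τ)) := by
  have hb : (0:ℝ) < 1 / τ := by positivity
  have hc := GaussianFourier.integrable_cexp_neg_mul_sq_norm_add (V := E2)
    (b := ((1/τ : ℝ) : ℂ)) (by simpa using hb) 0 0
  have hre := hc.re
  have h : Integrable (fun u : E2 => Real.exp (-(1/τ) * ‖u‖ ^ 2)) := by
    refine hre.congr (Filter.Eventually.of_forall fun v => ?_)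
    simp only [zero_mul, add_zero, RCLike.re_to_complex]
    rw [show -(↑(1/τ) : ℂ) * (↑‖v‖ : ℂ) ^ 2 = ((-(1/τ * ‖v‖ ^ 2) : ℝ) : ℂ) by push_cast; ring,
      Complex.exp_ofReal_re]
    congr 1; ring
  have h2 := h.comp_sub_left x
  refine h2.congr (Filter.Eventually.of_forall fun y => ?_)
  simp only [show ∀ a : ℝ, -(1/τ) * a = -a / τ from fun a => by ring]

private lemma gauss_integral (x : E2) {τ : ℝ} (hτ : 0 < τ) :
    ∫ y : E2, Real.exp (-‖x - y‖ ^ 2 / τ) = Real.pi * τ := by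
  have hb : (0:ℝ) < 1 / τ := by positivity
  have h1 : (∫ y : E2, Real.exp (-‖x - y‖ ^ 2 / τ))
      = ∫ y : E2, (fun u : E2 => Real.exp (-(1/τ) * ‖u‖ ^ 2)) (x - y) := by
    congr 1; funext y
    simp only [show ∀ a : ℝ, -(1/τ) * a = -a / τ from fun a => by ring]
  rw [h1, integral_sub_left_eq_self (fun u : E2 => Real.exp (-(1/τ) * ‖u‖ ^ 2)) volume x,
    GaussianFourier.integral_rexp_neg_mul_sq_norm hb]
  rw [finrank_euclideanSpace, Fintype.card_fin]
  have h2 : ((2:ℕ) : ℝ) / 2 = 1 := by norm_num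
  rw [h2, Real.rpow_one]
  field_simp

private lemma ball_vol (z : E2) {r : ℝ} (hr : 0 ≤ r) :
    (volume (Metric.ball z r)).toReal = Real.pi * r ^ 2 := by
  rw [EuclideanSpace.volume_ball]
  have h : Real.sqrt Real.pi ^ Fintype.card (Fin 2) /
      Real.Gamma (Fintype.card (Fin 2) / 2 + 1) = Real.pi := by
    rw [Fintype.card_fin]
    norm_num [Real.sq_sqrt Real.pi_nonneg, Real.Gamma_two]
  rw [h, Fintype.card_fin, ENNReal.toReal_mul, ENNReal.toReal_pow,
    ENNReal.toReal_ofReal hr, ENNReal.toReal_ofReal Real.pi_nonneg]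
  ring

/-- bound by π τ -/
private lemma inner_le_pit (x z : E2) (r : ℝ) {τ : ℝ} (hτ : 0 < τ) :
    (∫ y in Metric.ball z r, Real.exp (-‖x - y‖ ^ 2 / τ)) ≤ Real.pi * τ :=
  (setIntegral_le_integral (gauss_integrable x hτ)
    (Filter.Eventually.of_forall fun y => (Real.exp_pos _).le)).trans_eq (gauss_integral x hτ)

/-- bound by volume -/
private lemma inner_le_vol (x z : E2) {r τ : ℝ} (hr : 0 ≤ r) (hτ : 0 < τ) :
    (∫ y in Metric.ball z r, Real.exp (-‖x - y‖ ^ 2 / τ)) ≤ Real.pi * r ^ 2 := by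
  have h1 : (∫ y in Metric.ball z r, Real.exp (-‖x - y‖ ^ 2 / τ))
      ≤ ∫ _y in Metric.ball z r, (1:ℝ) := by
    refine setIntegral_mono_on ((gauss_integrable x hτ).integrableOn)
      (integrableOn_const measure_ball_lt_top.ne) measurableSet_ball fun y _ => ?_
    have : -‖x - y‖ ^ 2 / τ ≤ 0 :=
      div_nonpos_of_nonpos_of_nonneg (neg_nonpos.mpr (sq_nonneg _)) hτ.le
    exact Real.exp_le_one_iff.mpr this
  rw [setIntegral_const, smul_eq_mul, mul_one, Measure.real, ball_vol z hr] at h1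
  exact h1

set_option maxHeartbeats 1000000 in
theorem stmt_12 (ρ T : ℝ) (hρ : 1 / 2 < ρ) (hρ1 : ρ < 1) (hT : 0 < T) :
    ∃ C > (0:ℝ), ∃ ε₀ ∈ Set.Ioo (0:ℝ) 1, ∀ ε ∈ Set.Ioo (0:ℝ) ε₀,
      ∀ x : EuclideanSpace ℝ (Fin 2),
      ∀ O : ℝ → EuclideanSpace ℝ (Fin 2), Continuous O →
      ∀ t ∈ Set.Ioc (0:ℝ) T,
        (1 / ε) *
          (∫ s in (0:ℝ)..t,
            (∫ y in Metric.ball (O s) (ε ^ ρ / 2),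
              Real.exp (-‖x - y‖ ^ 2 / (t - s))) / (t - s))
          ≤ C * ε ^ (2 * ρ - 1) * (1 + Real.log (1 / ε)) := by
  refine ⟨|Real.log T| + 2 + Real.pi, by positivity, 1/2, by norm_num, ?_⟩
  rintro ε ⟨hε, hε2⟩ x O _hO t ⟨ht, htT⟩
  set C : ℝ := |Real.log T| + 2 + Real.pi with hC
  set r : ℝ := ε ^ ρ / 2 with hrdef
  have hε1 : ε < 1 := by linarith
  have hr0 : 0 ≤ r := by positivity
  set L : ℝ := Real.log (1 / ε) with hL
  have hL0 : 0 < L := Real.log_pos (by rw [lt_div_iff₀ hε]; linarith)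
  set f : ℝ → ℝ := fun s =>
    (∫ y in Metric.ball (O s) r, Real.exp (-‖x - y‖ ^ 2 / (t - s))) / (t - s) with hf
  set δ : ℝ := ε ^ (2 * ρ) with hδ
  have hδ0 : 0 < δ := Real.rpow_pos_of_pos hε _
  -- key : π r^2 ≤ δ
  have hrδ : Real.pi * r ^ 2 ≤ δ := by
    have hsq : (ε ^ ρ) ^ 2 = ε ^ (2*ρ) := by
      rw [← Real.rpow_natCast (ε ^ ρ) 2, ← Real.rpow_mul hε.le]
      norm_num [mul_comm]
    have h1 : r ^ 2 = ε ^ (2*ρ) / 4 := by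
      rw [hrdef, div_pow, hsq]; norm_num
    rw [h1, hδ]
    have h2 : (0:ℝ) ≤ ε ^ (2*ρ) := by positivity
    nlinarith [Real.pi_le_four]
  -- pointwise bound f s ≤ π for s ≤ t
  have hfπ : ∀ s ∈ Set.Icc (0:ℝ) t, f s ≤ Real.pi := by
    intro s hs
    rcases eq_or_lt_of_le hs.2 with h | h
    · simp [hf, h, div_zero, Real.pi_nonneg]
    · have hτ : 0 < t - s := by linarith
      rw [hf, div_le_iff₀ hτ]
      exact inner_le_pit x (O s) r hτ
  -- the RHS target
  have hRHS : C * ε ^ (2 * ρ - 1) * (1 + L) = (1/ε) * (δ * (C * (1 + L))) := by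
    rw [hδ, Real.rpow_sub hε, Real.rpow_one]
    field_simp
  have hfnonneg : 0 ≤ C * ε ^ (2 * ρ - 1) * (1 + L) := by positivity
  by_cases hInt : IntervalIntegrable f volume 0 t
  · -- main case
    have key : (∫ s in (0:ℝ)..t, f s) ≤ δ * (C * (1 + L)) := by
      by_cases hts : t ≤ δ
      · -- small t : bound by π t
        have h1 : (∫ s in (0:ℝ)..t, f s) ≤ ∫ _s in (0:ℝ)..t, Real.pi :=
          intervalIntegral.integral_mono_on ht.le hInt intervalIntegrable_const hfπ
        rw [intervalIntegral.integral_const, smul_eq_mul] at h1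
        have h2 : (t - 0) * Real.pi ≤ δ * Real.pi := by
          have := Real.pi_nonneg; nlinarith
        refine h1.trans (h2.trans ?_)
        have hπC : Real.pi ≤ C * (1 + L) := by
          have h3 : Real.pi ≤ C := by
            rw [hC]; nlinarith [abs_nonneg (Real.log T)]
          nlinarith [Real.pi_nonneg]
        nlinarith
      · -- split at c = t - δ
        push_neg at hts
        set c : ℝ := t - δ with hc
        have hc0 : 0 < c := by rw [hc]; linarith
        have hct : c < t := by rw [hc]; linarith
        have hI1 : IntervalIntegrable f volume 0 c :=
          hInt.mono_set (Set.uIcc_subset_uIcc (by simp) (by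
            rw [Set.mem_uIcc]; left; exact ⟨hc0.le, hct.le⟩))
        have hI2 : IntervalIntegrable f volume c t :=
          hInt.mono_set (Set.uIcc_subset_uIcc (by
            rw [Set.mem_uIcc]; left; exact ⟨hc0.le, hct.le⟩) (by simp [ht.le]))
        have hsplit : (∫ s in (0:ℝ)..c, f s) + (∫ s in c..t, f s) = ∫ s in (0:ℝ)..t, f s :=
          intervalIntegral.integral_add_adjacent_intervals hI1 hI2
        -- bound first piece : f s ≤ δ / (t - s)
        have hgcont : ContinuousOn (fun s : ℝ => δ / (t - s)) (Set.uIcc 0 c) := by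
          apply ContinuousOn.div continuousOn_const (by fun_prop)
          intro s hs
          rw [Set.uIcc_of_le hc0.le] at hs
          have h1 : s ≤ c := hs.2
          rw [hc] at h1
          have : 0 < t - s := by linarith
          linarith
        have hIg : IntervalIntegrable (fun s : ℝ => δ / (t - s)) volume 0 c :=
          hgcont.intervalIntegrable
        have h1 : (∫ s in (0:ℝ)..c, f s) ≤ ∫ s in (0:ℝ)..c, δ / (t - s) := by
          refine intervalIntegral.integral_mono_on hc0.le hI1 hIg fun s hs => ?_
          have hτ : 0 < t - s := by
            have h1 := hs.2; rw [hc] at h1; linarith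
          rw [hf, div_le_div_iff_of_pos_right hτ]
          exact (inner_le_vol x (O s) hr0 hτ).trans hrδ
        -- compute ∫₀ᶜ δ/(t-s) ds = δ * (log t - log δ)
        have hFTC : (∫ s in (0:ℝ)..c, (t - s)⁻¹) = Real.log t - Real.log δ := by
          have hderiv : ∀ s ∈ Set.uIcc (0:ℝ) c,
              HasDerivAt (fun u : ℝ => -Real.log (t - u)) ((t - s)⁻¹) s := by
            intro s hs
            rw [Set.uIcc_of_le hc0.le] at hs
            have hτ : 0 < t - s := by
              have h1 := hs.2; rw [hc] at h1; linarith
            have h1 : HasDerivAt (fun u : ℝ => t - u) (-1) s := by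
              simpa using (hasDerivAt_id s).const_sub t
            have h2 := (Real.hasDerivAt_log hτ.ne').comp s h1
            have h3 := h2.neg
            convert h3 using 1 <;> first | rfl | ring | (funext u; simp)
          have hcont : IntervalIntegrable (fun s : ℝ => (t - s)⁻¹) volume 0 c := by
            apply ContinuousOn.intervalIntegrable
            apply ContinuousOn.inv₀ (by fun_prop)
            intro s hs
            rw [Set.uIcc_of_le hc0.le] at hs
            have h1 := hs.2; rw [hc] at h1
            have : 0 < t - s := by linarith
            linarith
          rw [intervalIntegral.integral_eq_sub_of_hasDerivAt hderiv hcont]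
          have : t - c = δ := by rw [hc]; ring
          rw [this]
          ring
        have h1' : (∫ s in (0:ℝ)..c, δ / (t - s)) = δ * (Real.log t - Real.log δ) := by
          simp_rw [div_eq_mul_inv]
          rw [intervalIntegral.integral_const_mul, hFTC]
        -- bound second piece
        have h2 : (∫ s in c..t, f s) ≤ ∫ _s in c..t, Real.pi := by
          refine intervalIntegral.integral_mono_on hct.le hI2 intervalIntegrable_const
            fun s hs => hfπ s ⟨hc0.le.trans hs.1, hs.2⟩
        rw [intervalIntegral.integral_const, smul_eq_mul] at h2
        have h2' : (∫ s in c..t, f s) ≤ δ * Real.pi := by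
          refine h2.trans_eq ?_
          rw [hc]; ring
        -- log bounds
        have hlogt : Real.log t ≤ |Real.log T| :=
          (Real.log_le_log ht htT).trans (le_abs_self _)
        have hlogδ : -Real.log δ ≤ 2 * L := by
          rw [hδ, Real.log_rpow hε]
          have : Real.log ε = -L := by
            rw [hL, one_div, Real.log_inv]; ring
          rw [this]
          nlinarith
        have hbound : Real.log t - Real.log δ ≤ (|Real.log T| + 2) * (1 + L) := by
          have habs : 0 ≤ |Real.log T| := abs_nonneg _
          nlinarith
        calc (∫ s in (0:ℝ)..t, f s)
            = (∫ s in (0:ℝ)..c, f s) + (∫ s in c..t, f s) := hsplit.symm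
          _ ≤ δ * (Real.log t - Real.log δ) + δ * Real.pi := by
              have := h1.trans_eq h1'
              linarith
          _ ≤ δ * ((|Real.log T| + 2) * (1 + L)) + δ * Real.pi := by nlinarith
          _ ≤ δ * (C * (1 + L)) := by
              rw [hC]
              nlinarith [mul_nonneg (mul_nonneg hδ0.le Real.pi_nonneg) hL0.le]
    rw [hRHS]
    have h1ε : (0:ℝ) < 1 / ε := by positivity
    exact mul_le_mul_of_nonneg_left key h1ε.le
  · rw [intervalIntegral.integral_undef hInt, mul_zero]
    exact hfnonneg
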